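/- Let k ≥ 2. Consider n agents with signals s : Fin n → ℕ taking values in {0,1,…,k−1}, m items, and for each agent i and each subset T of the items a valuation v_{iT} : (Fin n → ℝ) → ℝ that is nonnegative on nonnegative vectors and weakly increasing in each coordinate. For ℓ ∈ {1,…,k−1}, let N_{≥ℓ} = {i : s_i ≥ ℓ} and let ŝ^ℓ : Fin n → ℝ be given by ŝ^ℓ(j) = min(s_j, ℓ). Then for every allocation T* (a function assigning each agent i a set T*_i ⊆ Fin m with the T*_i pairwise disjoint), Σ_{ℓ=1}^{k−1} [ max over allocations S of Σ_{i ∈ N_{≥ℓ}} v_{i S_i}(ŝ^ℓ) ] ≥ Σ_{i : s_i ≥ 1} v_{i T*_i}( s_i·e_i ), where the max is over allocations S of the items to the agents in N_{≥ℓ}, and s_i·e_i is the vector with value s_i at coordinate i and 0 elsewhere. Equivalently, the Random Threshold mechanism gives a (k−1)-approximation to the SELF component Σ_{i : s_i ≥ 1} v_{i T*_i}(0_{−i}, s_i) of the optimal social welfare. -/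
import Mathlib


/-- An allocation of the `m` items to the `n` agents: each agent `i` gets a
bundle `T i ⊆ Fin m`, and the bundles of distinct agents are disjoint. -/
def IsAlloc {n m : ℕ} (T : Fin n → Finset (Fin m)) : Prop :=
  ∀ i j : Fin n, i ≠ j → Disjoint (T i) (T j)

/-- Supremum of `f` over all allocations of the `m` items to the `n` agents. -/
noncomputable def allocSup {n m : ℕ} (f : (Fin n → Finset (Fin m)) → ℝ) : ℝ :=
  ⨆ T : {T : Fin n → Finset (Fin m) // IsAlloc T}, f T.1

/-- Lemma 6.3 (lem:self_cover): with signals `s i ∈ {0,…,k−1}` and valuations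
`v i T` nonnegative on nonnegative vectors and weakly increasing in each
coordinate, summing over thresholds `ℓ ∈ {1,…,k−1}` the optimal proxy welfare
of the agents with signal `≥ ℓ` at the capped signal vector
`ŝ^ℓ(j) = min (s j) ℓ` dominates the SELF component
`Σ_{i : s_i ≥ 1} v_{i T*_i}(0_{−i}, s_i)` of any allocation `T*`; i.e., the
Random Threshold mechanism is a `(k−1)`-approximation to the SELF component. -/
theorem random_threshold_self_cover (k : ℕ) (hk : 2 ≤ k) (n m : ℕ)
    (s : Fin n → ℕ) (hs : ∀ i, s i ≤ k - 1)
    (v : Fin n → Finset (Fin m) → (Fin n → ℝ) → ℝ)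
    (hpos : ∀ i T (t : Fin n → ℝ), (∀ l, 0 ≤ t l) → 0 ≤ v i T t)
    (hmono : ∀ i T (t t' : Fin n → ℝ), (∀ l, t l ≤ t' l) → v i T t ≤ v i T t')
    (Tstar : Fin n → Finset (Fin m)) (hTstar : IsAlloc Tstar) :
    ∑ ℓ ∈ Finset.Icc 1 (k - 1),
        allocSup (fun S => ∑ i ∈ Finset.univ.filter (fun i => ℓ ≤ s i),
          v i (S i) (fun j => ((min (s j) ℓ : ℕ) : ℝ)))
      ≥ ∑ i ∈ Finset.univ.filter (fun i => 1 ≤ s i),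
          v i (Tstar i) (fun j => if j = i then (s i : ℝ) else 0) := by

  classical
  set g : Fin n → ℝ := fun i => v i (Tstar i) (fun j => if j = i then (s i : ℝ) else 0) with hg
  have key : ∀ ℓ ∈ Finset.Icc 1 (k - 1),
      (∑ i ∈ (Finset.univ.filter (fun i => 1 ≤ s i)).filter (fun i => s i = ℓ), g i)
        ≤ allocSup (fun S => ∑ i ∈ Finset.univ.filter (fun i => ℓ ≤ s i),
            v i (S i) (fun j => ((min (s j) ℓ : ℕ) : ℝ))) := by
    intro ℓ hℓ
    have hℓ1 : 1 ≤ ℓ := (Finset.mem_Icc.mp hℓ).1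
    have hA : (∑ i ∈ (Finset.univ.filter (fun i => 1 ≤ s i)).filter (fun i => s i = ℓ), g i)
        ≤ ∑ i ∈ (Finset.univ.filter (fun i => 1 ≤ s i)).filter (fun i => s i = ℓ),
            v i (Tstar i) (fun j => ((min (s j) ℓ : ℕ) : ℝ)) := by
      apply Finset.sum_le_sum
      intro i hi
      have hsi : s i = ℓ := (Finset.mem_filter.mp hi).2
      apply hmono
      intro j
      by_cases hji : j = i
      · subst hji
        simp [hsi]
      · simp [hji]
    have hB : (∑ i ∈ (Finset.univ.filter (fun i => 1 ≤ s i)).filter (fun i => s i = ℓ),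
            v i (Tstar i) (fun j => ((min (s j) ℓ : ℕ) : ℝ)))
        ≤ ∑ i ∈ Finset.univ.filter (fun i => ℓ ≤ s i),
            v i (Tstar i) (fun j => ((min (s j) ℓ : ℕ) : ℝ)) := by
      apply Finset.sum_le_sum_of_subset_of_nonneg
      · intro i hi
        have hsi : s i = ℓ := (Finset.mem_filter.mp hi).2
        simp [hsi]
      · intro i _ _
        apply hpos
        intro l
        positivity
    have hC : (∑ i ∈ Finset.univ.filter (fun i => ℓ ≤ s i),
            v i (Tstar i) (fun j => ((min (s j) ℓ : ℕ) : ℝ)))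
        ≤ allocSup (fun S => ∑ i ∈ Finset.univ.filter (fun i => ℓ ≤ s i),
            v i (S i) (fun j => ((min (s j) ℓ : ℕ) : ℝ))) := by
      unfold allocSup
      apply le_ciSup (f := fun T : {T : Fin n → Finset (Fin m) // IsAlloc T} =>
          ∑ i ∈ Finset.univ.filter (fun i => ℓ ≤ s i),
            v i (T.1 i) (fun j => ((min (s j) ℓ : ℕ) : ℝ)))
        (Set.Finite.bddAbove (Set.finite_range _)) ⟨Tstar, hTstar⟩
    exact (hA.trans hB).trans hC
  have hfiber : (∑ ℓ ∈ Finset.Icc 1 (k - 1),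
      ∑ i ∈ (Finset.univ.filter (fun i => 1 ≤ s i)).filter (fun i => s i = ℓ), g i)
      = ∑ i ∈ Finset.univ.filter (fun i => 1 ≤ s i), g i := by
    apply Finset.sum_fiberwise_of_maps_to
    intro i hi
    have : 1 ≤ s i := (Finset.mem_filter.mp hi).2
    exact Finset.mem_Icc.mpr ⟨this, hs i⟩
  calc ∑ i ∈ Finset.univ.filter (fun i => 1 ≤ s i),
          v i (Tstar i) (fun j => if j = i then (s i : ℝ) else 0)
      = ∑ ℓ ∈ Finset.Icc 1 (k - 1),
          ∑ i ∈ (Finset.univ.filter (fun i => 1 ≤ s i)).filter (fun i => s i = ℓ), g i :=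
        hfiber.symm
    _ ≤ ∑ ℓ ∈ Finset.Icc 1 (k - 1),
        allocSup (fun S => ∑ i ∈ Finset.univ.filter (fun i => ℓ ≤ s i),
          v i (S i) (fun j => ((min (s j) ℓ : ℕ) : ℝ))) :=
        Finset.sum_le_sum key
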